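/- arXiv:2510.04736 — 7 statements merged into one kernel-verified Lean document; each statement's English description precedes it below -/
import Mathlib

section
/- Let (Ω, ℙ) be a probability space, L : Ω → ℝ a random variable whose law is absolutely continuous with respect to Lebesgue measure with density bounded almost everywhere by a constant M ≥ 0, and X : Ω → ℝ^d an integrable random vector with ‖X‖₂ ≤ G almost surely. For z ∈ ℝ define μ(z) = E[X · 1{L ≥ z}]. Then for all z, z̃ ∈ ℝ, ‖μ(z̃) − μ(z)‖₂ ≤ G · M · |z̃ − z|. -/
open MeasureTheory

lemma tail_weighted_key
    {Ω : Type*} [MeasurableSpace Ω] (P : Measure Ω) [IsProbabilityMeasure P]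
    {d : ℕ} (L : Ω → ℝ) (hL : Measurable L)
    (hac : P.map L ≪ (volume : Measure ℝ))
    (M : ℝ) (hM : 0 ≤ M)
    (hdens : ∀ᵐ x ∂(volume : Measure ℝ),
      (P.map L).rnDeriv volume x ≤ ENNReal.ofReal M)
    (X : Ω → EuclideanSpace ℝ (Fin d)) (hXint : Integrable X P)
    (G : ℝ) (hG : ∀ᵐ ω ∂P, ‖X ω‖ ≤ G)
    (z ztilde : ℝ) (hz : z ≤ ztilde) :
    ‖(∫ ω in {ω | ztilde ≤ L ω}, X ω ∂P) - ∫ ω in {ω | z ≤ L ω}, X ω ∂P‖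
      ≤ G * M * (ztilde - z) := by
  have hG0 : 0 ≤ G := by
    obtain ⟨ω, hω⟩ := hG.exists
    exact le_trans (norm_nonneg _) hω
  set S : Set Ω := {ω | z ≤ L ω ∧ L ω < ztilde} with hS
  have hA : MeasurableSet {ω | ztilde ≤ L ω} := measurableSet_le measurable_const hL
  have hunion : {ω | z ≤ L ω} = S ∪ {ω | ztilde ≤ L ω} := by
    ext ω
    simp only [Set.mem_setOf_eq, Set.mem_union, hS]
    constructor
    · intro h
      rcases lt_or_ge (L ω) ztilde with h' | h'
      · exact Or.inl ⟨h, h'⟩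
      · exact Or.inr h'
    · rintro (⟨h, _⟩ | h)
      · exact h
      · exact le_trans hz h
  have hdisj : Disjoint S {ω | ztilde ≤ L ω} := by
    rw [Set.disjoint_left]
    rintro ω ⟨_, h2⟩ h3
    exact absurd h3 (not_le.mpr h2)
  have hsplit : ∫ ω in {ω | z ≤ L ω}, X ω ∂P
      = (∫ ω in S, X ω ∂P) + ∫ ω in {ω | ztilde ≤ L ω}, X ω ∂P := by
    rw [hunion]
    exact setIntegral_union hdisj hA hXint.integrableOn hXint.integrableOn
  have heq : (∫ ω in {ω | ztilde ≤ L ω}, X ω ∂P) - ∫ ω in {ω | z ≤ L ω}, X ω ∂P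
      = -(∫ ω in S, X ω ∂P) := by rw [hsplit]; abel
  rw [heq, norm_neg]
  have hPS : P S ≤ ENNReal.ofReal (M * (ztilde - z)) := by
    have hpre : S = L ⁻¹' Set.Ico z ztilde := rfl
    have hmap : P S = (P.map L) (Set.Ico z ztilde) := by
      rw [Measure.map_apply hL measurableSet_Ico, ← hpre]
    rw [hmap]
    have hwd : P.map L = volume.withDensity ((P.map L).rnDeriv volume) :=
      (Measure.withDensity_rnDeriv_eq _ _ hac).symm
    rw [hwd, withDensity_apply _ measurableSet_Ico]
    calc ∫⁻ x in Set.Ico z ztilde, (P.map L).rnDeriv volume x ∂volume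
        ≤ ∫⁻ _ in Set.Ico z ztilde, ENNReal.ofReal M ∂volume :=
          lintegral_mono_ae (ae_restrict_of_ae hdens)
      _ = ENNReal.ofReal M * volume (Set.Ico z ztilde) := by
          simp [lintegral_const, mul_comm]
      _ = ENNReal.ofReal (M * (ztilde - z)) := by
          rw [Real.volume_Ico, ← ENNReal.ofReal_mul hM]
  have hPSfin : P S < ⊤ := lt_of_le_of_lt (prob_le_one) ENNReal.one_lt_top
  have hnorm : ‖∫ ω in S, X ω ∂P‖ ≤ G * (P S).toReal :=
    norm_setIntegral_le_of_norm_le_const_ae hPSfin (ae_restrict_of_ae hG)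
  have htr : (P S).toReal ≤ M * (ztilde - z) := by
    refine ENNReal.toReal_le_of_le_ofReal ?_ hPS
    exact mul_nonneg hM (sub_nonneg.mpr hz)
  calc ‖∫ ω in S, X ω ∂P‖ ≤ G * (P S).toReal := hnorm
    _ ≤ G * (M * (ztilde - z)) := mul_le_mul_of_nonneg_left htr hG0
    _ = G * M * (ztilde - z) := by ring

/-- If the law of `L` has a Lebesgue density bounded a.e. by `M`, and `X` is an
integrable random vector bounded a.s. in norm by `G`, then the tail-weighted
expectation `μ(z) = E[X · 1{L ≥ z}]` is Lipschitz in the threshold: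
`‖μ(z̃) − μ(z)‖ ≤ G · M · |z̃ − z|`. -/
theorem tail_weighted_expectation_lipschitz
    {Ω : Type*} [MeasurableSpace Ω] (P : Measure Ω) [IsProbabilityMeasure P]
    {d : ℕ} (L : Ω → ℝ) (hL : Measurable L)
    (hac : P.map L ≪ (volume : Measure ℝ))
    (M : ℝ) (hM : 0 ≤ M)
    (hdens : ∀ᵐ x ∂(volume : Measure ℝ),
      (P.map L).rnDeriv volume x ≤ ENNReal.ofReal M)
    (X : Ω → EuclideanSpace ℝ (Fin d)) (hXint : Integrable X P)
    (G : ℝ) (hG : ∀ᵐ ω ∂P, ‖X ω‖ ≤ G)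
    (μ : ℝ → EuclideanSpace ℝ (Fin d))
    (hμ : ∀ z : ℝ, μ z = ∫ ω in {ω | z ≤ L ω}, X ω ∂P) :
    ∀ z ztilde : ℝ, ‖μ ztilde - μ z‖ ≤ G * M * |ztilde - z| := by
  intro z ztilde
  rcases le_total z ztilde with h | h
  · rw [hμ z, hμ ztilde, abs_of_nonneg (sub_nonneg.mpr h)]
    exact tail_weighted_key P L hL hac M hM hdens X hXint G hG z ztilde h
  · rw [norm_sub_rev, abs_sub_comm, hμ z, hμ ztilde,
      abs_of_nonneg (sub_nonneg.mpr h)]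
    exact tail_weighted_key P L hL hac M hM hdens X hXint G hG ztilde z h
end

section
/- Let (Ω, ℙ) be a probability space, L : Ω → ℝ a random variable whose law is absolutely continuous with respect to Lebesgue measure with density bounded almost everywhere by M ≥ 0, and X : Ω → ℝ^d an integrable random vector with ‖X‖₂ ≤ G almost surely. For z ∈ ℝ set μ(z) = E[X · 1{L ≥ z}] and p(z) = ℙ(L ≥ z), and when p(z) > 0 set g(z) = p(z)⁻¹ • μ(z). Then for all z, z̃ ∈ ℝ with p(z) > 0 and p(z̃) > 0, ‖g(z̃) − g(z)‖₂ ≤ 2 · G · M · |z̃ − z| / p(z̃). -/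
open MeasureTheory

/-- Proposition 1 (bias from VaR threshold error): if the law of `L` has a
Lebesgue density bounded a.e. by `M` and `X` is integrable with `‖X‖ ≤ G` a.s.,
then the conditional expectation `g(z) = E[X · 1{L ≥ z}] / ℙ(L ≥ z)` satisfies
`‖g(z̃) − g(z)‖ ≤ 2 G M |z̃ − z| / p(z̃)` whenever both tail probabilities are
positive. -/
theorem cvar_subgradient_threshold_bias
    {Ω : Type*} [MeasurableSpace Ω] (P : Measure Ω) [IsProbabilityMeasure P]
    {d : ℕ} (L : Ω → ℝ) (hL : Measurable L)
    (hac : P.map L ≪ (volume : Measure ℝ))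
    (M : ℝ) (hM : 0 ≤ M)
    (hdens : ∀ᵐ x ∂(volume : Measure ℝ),
      (P.map L).rnDeriv volume x ≤ ENNReal.ofReal M)
    (X : Ω → EuclideanSpace ℝ (Fin d)) (hXint : Integrable X P)
    (G : ℝ) (hG : ∀ᵐ ω ∂P, ‖X ω‖ ≤ G)
    (μ : ℝ → EuclideanSpace ℝ (Fin d))
    (hμ : ∀ z : ℝ, μ z = ∫ ω in {ω | z ≤ L ω}, X ω ∂P)
    (p : ℝ → ℝ)
    (hp : ∀ z : ℝ, p z = (P {ω | z ≤ L ω}).toReal)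
    (g : ℝ → EuclideanSpace ℝ (Fin d))
    (hg : ∀ z : ℝ, 0 < p z → g z = (p z)⁻¹ • μ z) :
    ∀ z ztilde : ℝ, 0 < p z → 0 < p ztilde →
      ‖g ztilde - g z‖ ≤ 2 * G * M * |ztilde - z| / p ztilde := by
  intro z zt hpz hpt
  have hG0 : 0 ≤ G := by
    obtain ⟨ω, hω⟩ := hG.exists
    exact le_trans (norm_nonneg _) hω
  set A : ℝ → Set Ω := fun z => {ω | z ≤ L ω} with hA
  have hAmeas : ∀ z, MeasurableSet (A z) := fun z => hL measurableSet_Ici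
  have hAfin : ∀ z, P (A z) < ⊤ := fun z => measure_lt_top _ _
  -- measure of Ico bound
  have hIco : ∀ a b : ℝ, a ≤ b → (P (L ⁻¹' Set.Ico a b)).toReal ≤ M * (b - a) := by
    intro a b hab
    have h1 : P (L ⁻¹' Set.Ico a b) = (P.map L) (Set.Ico a b) :=
      (Measure.map_apply hL measurableSet_Ico).symm
    have h2 : (P.map L) (Set.Ico a b)
        ≤ ENNReal.ofReal M * volume (Set.Ico a b) := by
      conv_lhs => rw [← Measure.withDensity_rnDeriv_eq (P.map L) volume hac]
      rw [withDensity_apply _ measurableSet_Ico]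
      calc ∫⁻ x in Set.Ico a b, (P.map L).rnDeriv volume x ∂volume
          ≤ ∫⁻ _x in Set.Ico a b, ENNReal.ofReal M ∂volume :=
            lintegral_mono_ae (ae_restrict_of_ae hdens)
        _ = ENNReal.ofReal M * volume (Set.Ico a b) := setLIntegral_const _ _
    have h3 : ENNReal.ofReal M * volume (Set.Ico a b) = ENNReal.ofReal (M * (b - a)) := by
      rw [Real.volume_Ico, ENNReal.ofReal_mul hM]
    rw [h1]
    exact ENNReal.toReal_le_of_le_ofReal (by nlinarith) (h3 ▸ h2)
  -- diff set identity
  have hdiffset : ∀ a b : ℝ, A a \ A b = L ⁻¹' Set.Ico a b := by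
    intro a b
    ext ω
    simp only [hA, Set.mem_diff, Set.mem_setOf_eq, Set.mem_preimage, Set.mem_Ico, not_le]
  -- ordered helpers
  have hsub : ∀ a b : ℝ, a ≤ b → A b ⊆ A a := fun a b hab ω hω => le_trans hab hω
  have hnormint : ∀ s : Set Ω, MeasurableSet s → ‖∫ ω in s, X ω ∂P‖ ≤ G * (P s).toReal := by
    intro s hs
    exact norm_setIntegral_le_of_norm_le_const_ae' (measure_lt_top _ _)
      (hG.mono fun ω h _ => h)
  have hpdiff : |p zt - p z| ≤ M * |zt - z| := by
    have key : ∀ a b : ℝ, a ≤ b → p a - p b ≤ M * (b - a) ∧ p b ≤ p a := by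
      intro a b hab
      have hm : P (A b) ≤ P (A a) := measure_mono (hsub a b hab)
      have hdm : P (A a \ A b) = P (A a) - P (A b) :=
        measure_diff (hsub a b hab) (hAmeas b).nullMeasurableSet (hAfin b).ne
      have : (P (A a \ A b)).toReal = p a - p b := by
        rw [hdm, ENNReal.toReal_sub_of_le hm (hAfin a).ne, hp, hp]
      constructor
      · rw [← this, hdiffset]
        exact hIco a b hab
      · rw [hp, hp]
        exact ENNReal.toReal_mono (hAfin a).ne hm
    rcases le_total z zt with h | h
    · obtain ⟨h1, h2⟩ := key z zt h
      rw [abs_of_nonpos (by linarith), abs_of_nonneg (by linarith)]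
      linarith
    · obtain ⟨h1, h2⟩ := key zt z h
      rw [abs_of_nonneg (by linarith), abs_of_nonpos (by linarith)]
      linarith
  have hμdiff : ‖μ zt - μ z‖ ≤ G * (M * |zt - z|) := by
    have key : ∀ a b : ℝ, a ≤ b → ‖μ a - μ b‖ ≤ G * (M * (b - a)) := by
      intro a b hab
      have hi : ∫ ω in A a \ A b, X ω ∂P = ∫ ω in A a, X ω ∂P - ∫ ω in A b, X ω ∂P :=
        integral_diff (hAmeas b) hXint.integrableOn (hsub a b hab)
      have : μ a - μ b = ∫ ω in A a \ A b, X ω ∂P := by rw [hμ, hμ, hi]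
      rw [this]
      calc ‖∫ ω in A a \ A b, X ω ∂P‖ ≤ G * (P (A a \ A b)).toReal :=
            hnormint _ ((hAmeas a).diff (hAmeas b))
        _ ≤ G * (M * (b - a)) := by
            have := hIco a b hab
            rw [hdiffset]
            nlinarith [ENNReal.toReal_nonneg (a := P (L ⁻¹' Set.Ico a b))]
    rcases le_total z zt with h | h
    · rw [norm_sub_rev, abs_of_nonneg (by linarith)]
      exact key z zt h
    · rw [abs_of_nonpos (by linarith)]
      have := key zt z h
      linarith [this]
  have hμz : ‖μ z‖ ≤ G * p z := by
    rw [hμ, hp]; exact hnormint _ (hAmeas z)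
  -- final assembly
  rw [hg z hpz, hg zt hpt]
  have hdecomp : (p zt)⁻¹ • μ zt - (p z)⁻¹ • μ z
      = (p zt)⁻¹ • (μ zt - μ z) + ((p zt)⁻¹ - (p z)⁻¹) • μ z := by
    rw [smul_sub, sub_smul]; abel
  rw [hdecomp]
  set D := M * |zt - z| with hD
  have hD0 : 0 ≤ D := by positivity
  have T1 : ‖(p zt)⁻¹ • (μ zt - μ z)‖ ≤ G * D / p zt := by
    rw [norm_smul, norm_inv, Real.norm_eq_abs, abs_of_pos hpt, div_eq_inv_mul]
    exact mul_le_mul_of_nonneg_left hμdiff (by positivity)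
  have T2 : ‖((p zt)⁻¹ - (p z)⁻¹) • μ z‖ ≤ G * D / p zt := by
    rw [norm_smul, Real.norm_eq_abs]
    have h1 : |(p zt)⁻¹ - (p z)⁻¹| = |p z - p zt| / (p zt * p z) := by
      rw [inv_sub_inv hpt.ne' hpz.ne', abs_div, abs_of_pos (mul_pos hpt hpz)]
    have h2 : |p z - p zt| ≤ D := by rw [abs_sub_comm]; exact hpdiff
    rw [h1]
    calc |p z - p zt| / (p zt * p z) * ‖μ z‖
        ≤ D / (p zt * p z) * (G * p z) := by
          apply mul_le_mul _ hμz (norm_nonneg _) (by positivity)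
          gcongr
      _ = G * D / p zt := by field_simp
  calc ‖(p zt)⁻¹ • (μ zt - μ z) + ((p zt)⁻¹ - (p z)⁻¹) • μ z‖
      ≤ ‖(p zt)⁻¹ • (μ zt - μ z)‖ + ‖((p zt)⁻¹ - (p z)⁻¹) • μ z‖ := norm_add_le _ _
    _ ≤ G * D / p zt + G * D / p zt := add_le_add T1 T2
    _ = 2 * G * M * |zt - z| / p zt := by rw [hD]; ring
end

section
/- Let m < M, p > 0, p̂ > 0 and A, Â, ε_A, ε_p be real numbers with |Â − A| ≤ ε_A and |p̂ − p| ≤ ε_p. Define μ = m·p + (M − m)·A, μ̂ = m·p̂ + (M − m)·Â, g = −μ/p and ĝ = −μ̂/p̂. Then |ĝ − g| ≤ (M − m)·ε_A / p̂ + (|m|/p̂ + |μ|/(p̂·p)) · ε_p. -/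
/-- Per-coordinate accuracy bound (Section 3.3): given amplitude estimates
`Â, p̂` with additive errors `ε_A, ε_p` of the true quantities `A, p`, the
de-rescaled gradient coordinate `ĝ = −μ̂/p̂` with `μ̂ = m·p̂ + (M − m)·Â`
satisfies `|ĝ − g| ≤ (M − m)·ε_A/p̂ + (|m|/p̂ + |μ|/(p̂·p))·ε_p`. -/
theorem qae_gradient_coordinate_error
    (m M p phat A Ahat epsA epsp : ℝ)
    (hmM : m < M) (hp : 0 < p) (hphat : 0 < phat)
    (hA : |Ahat - A| ≤ epsA) (hpe : |phat - p| ≤ epsp)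
    (μ μhat g ghat : ℝ)
    (hμ : μ = m * p + (M - m) * A)
    (hμhat : μhat = m * phat + (M - m) * Ahat)
    (hg : g = -μ / p) (hghat : ghat = -μhat / phat) :
    |ghat - g| ≤ (M - m) * epsA / phat + (|m| / phat + |μ| / (phat * p)) * epsp := by
  have key : ghat - g =
      (m * (p - phat) + (M - m) * (A - Ahat)) / phat + μ * (phat - p) / (phat * p) := by
    subst hg hghat hμ hμhat
    field_simp
    ring
  rw [key]
  have h1 : |(m * (p - phat) + (M - m) * (A - Ahat)) / phat + μ * (phat - p) / (phat * p)|
      ≤ |m * (p - phat) + (M - m) * (A - Ahat)| / phat + |μ| * |phat - p| / (phat * p) := by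
    calc _ ≤ |(m * (p - phat) + (M - m) * (A - Ahat)) / phat| + |μ * (phat - p) / (phat * p)| :=
          abs_add_le _ _
      _ = _ := by
          rw [abs_div, abs_div, abs_mul, abs_of_pos hphat, abs_of_pos (mul_pos hphat hp)]
  refine h1.trans ?_
  have hmp : |m * (p - phat)| ≤ |m| * epsp := by
    rw [abs_mul]
    exact mul_le_mul_of_nonneg_left (by rwa [abs_sub_comm]) (abs_nonneg _)
  have hMA : |(M - m) * (A - Ahat)| ≤ (M - m) * epsA := by
    rw [abs_mul, abs_of_pos (by linarith)]
    exact mul_le_mul_of_nonneg_left (by rwa [abs_sub_comm]) (by linarith)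
  have hsum : |m * (p - phat) + (M - m) * (A - Ahat)| ≤ |m| * epsp + (M - m) * epsA :=
    (abs_add_le _ _).trans (add_le_add hmp hMA)
  have hmub : |μ| * |phat - p| ≤ |μ| * epsp := mul_le_mul_of_nonneg_left hpe (abs_nonneg _)
  calc |m * (p - phat) + (M - m) * (A - Ahat)| / phat + |μ| * |phat - p| / (phat * p)
      ≤ (|m| * epsp + (M - m) * epsA) / phat + |μ| * epsp / (phat * p) := by
        gcongr
      _ = (M - m) * epsA / phat + (|m| / phat + |μ| / (phat * p)) * epsp := by ring
end

section
/- Let E be a real inner product space, W ⊆ E a nonempty set with ‖u − v‖ ≤ D for all u, v ∈ W, and P : E → E a map with P(x) ∈ W for all x and ‖P(x) − y‖ ≤ ‖x − y‖ for all x ∈ E and y ∈ W. Let f : E → ℝ, T ≥ 1 a natural number, η > 0, ε ≥ 0, G ≥ 0, and let (w_t), (g_t), (e_t) be sequences with w_0 ∈ W and w_{t+1} = P(w_t − η • (g_t + e_t)) for all t < T. Assume for each t < T: f(y) ≥ f(w_t) + ⟪g_t, y − w_t⟫ for all y ∈ W, ‖g_t‖ ≤ G, and ‖e_t‖ ≤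 ε. Then for every w⋆ ∈ W, min_{t < T} (f(w_t) − f(w⋆)) ≤ D²/(2ηT) + η(G + ε)²/2 + ε·D. -/
open scoped RealInnerProductSpace

/-- Finite-horizon bound for projected subgradient descent with an ε-accurate
gradient oracle (deterministic core of Proposition 3): with feasible set `W` of
diameter at most `D`, a projection `P` onto `W` nonexpansive toward points of
`W`, subgradients bounded by `G`, oracle errors bounded by `ε`, and step size
`η > 0`, we have
`min_{t<T} (f(w_t) − f(w⋆)) ≤ D²/(2ηT) + η(G + ε)²/2 + ε·D`. -/
theorem projected_subgradient_descent_inexact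
    {E : Type*} [NormedAddCommGroup E] [InnerProductSpace ℝ E]
    (W : Set E) (hWne : W.Nonempty) (D : ℝ)
    (hD : ∀ u ∈ W, ∀ v ∈ W, ‖u - v‖ ≤ D)
    (P : E → E) (hPmem : ∀ x : E, P x ∈ W)
    (hPnonexp : ∀ x : E, ∀ y ∈ W, ‖P x - y‖ ≤ ‖x - y‖)
    (f : E → ℝ) (T : ℕ) (hT : 1 ≤ T) (η : ℝ) (hη : 0 < η)
    (ε G : ℝ) (hε : 0 ≤ ε) (hG : 0 ≤ G)
    (w g e : ℕ → E) (hw0 : w 0 ∈ W)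
    (hrec : ∀ t < T, w (t + 1) = P (w t - η • (g t + e t)))
    (hsub : ∀ t < T, ∀ y ∈ W, f y ≥ f (w t) + ⟪g t, y - w t⟫)
    (hgB : ∀ t < T, ‖g t‖ ≤ G)
    (heB : ∀ t < T, ‖e t‖ ≤ ε) :
    ∀ wstar ∈ W,
      (Finset.range T).inf' (Finset.nonempty_range_iff.mpr (by omega))
          (fun t => f (w t) - f wstar)
        ≤ D ^ 2 / (2 * η * T) + η * (G + ε) ^ 2 / 2 + ε * D := by
  intro wstar hstar
  have hD0 : 0 ≤ D := le_trans (norm_nonneg _) (hD _ hw0 _ hw0)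
  have hwW : ∀ t, t ≤ T → w t ∈ W := by
    intro t
    induction t with
    | zero => intro _; exact hw0
    | succ n ih => intro h; rw [hrec n (by omega)]; exact hPmem _
  -- per-step inequality
  have hkey : ∀ t < T, 2*η*(f (w t) - f wstar) ≤
      (‖w t - wstar‖^2 - ‖w (t+1) - wstar‖^2) + η^2*(G+ε)^2 + 2*η*(ε*D) := by
    intro t ht
    have hwt : w t ∈ W := hwW t ht.le
    have hne : ‖w (t+1) - wstar‖ ≤ ‖(w t - wstar) - η • (g t + e t)‖ := by
      rw [hrec t ht]
      have h := hPnonexp (w t - η • (g t + e t)) wstar hstar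
      have heq : (w t - η • (g t + e t)) - wstar = (w t - wstar) - η • (g t + e t) := by abel
      rwa [heq] at h
    have hsq : ‖w (t+1) - wstar‖^2 ≤ ‖(w t - wstar) - η • (g t + e t)‖^2 :=
      pow_le_pow_left₀ (norm_nonneg _) hne 2
    have hexp : ‖(w t - wstar) - η • (g t + e t)‖^2 =
        ‖w t - wstar‖^2 - 2*η*⟪g t + e t, w t - wstar⟫ + η^2*‖g t + e t‖^2 := by
      rw [norm_sub_sq_real, real_inner_smul_right, norm_smul, Real.norm_eq_abs,
        abs_of_pos hη, real_inner_comm]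
      ring
    have hfb : f (w t) - f wstar ≤ ⟪g t, w t - wstar⟫ := by
      have h1 := hsub t ht wstar hstar
      have h2 : ⟪g t, wstar - w t⟫ = -⟪g t, w t - wstar⟫ := by
        rw [show wstar - w t = -(w t - wstar) by abel, inner_neg_right]
      linarith
    have hsplit : ⟪g t + e t, w t - wstar⟫ = ⟪g t, w t - wstar⟫ + ⟪e t, w t - wstar⟫ :=
      inner_add_left _ _ _
    have herr : |⟪e t, w t - wstar⟫| ≤ ε * D :=
      le_trans (abs_real_inner_le_norm _ _)
        (mul_le_mul (heB t ht) (hD _ hwt _ hstar) (norm_nonneg _) hε)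
    have herr' := abs_le.mp herr
    have hgeb : ‖g t + e t‖ ≤ G + ε :=
      le_trans (norm_add_le _ _) (add_le_add (hgB t ht) (heB t ht))
    have hge2 : ‖g t + e t‖^2 ≤ (G+ε)^2 := pow_le_pow_left₀ (norm_nonneg _) hgeb 2
    rw [hexp] at hsq
    nlinarith [mul_le_mul_of_nonneg_left hfb (by linarith : (0:ℝ) ≤ 2*η),
      mul_le_mul_of_nonneg_left herr'.1 (by linarith : (0:ℝ) ≤ 2*η),
      mul_le_mul_of_nonneg_left hge2 (sq_nonneg η)]
  -- sum over t
  have hsum : 2*η*(∑ t ∈ Finset.range T, (f (w t) - f wstar)) ≤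
      D^2 + T*(η^2*(G+ε)^2) + T*(2*η*(ε*D)) := by
    have h1 : ∑ t ∈ Finset.range T, (2*η*(f (w t) - f wstar)) ≤
        ∑ t ∈ Finset.range T, ((‖w t - wstar‖^2 - ‖w (t+1) - wstar‖^2)
          + η^2*(G+ε)^2 + 2*η*(ε*D)) :=
      Finset.sum_le_sum fun t ht => hkey t (Finset.mem_range.mp ht)
    rw [Finset.sum_add_distrib, Finset.sum_add_distrib, Finset.sum_range_sub',
      Finset.sum_const, Finset.sum_const, Finset.card_range, ← Finset.mul_sum] at h1
    have ha0 : ‖w 0 - wstar‖^2 ≤ D^2 :=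
      pow_le_pow_left₀ (norm_nonneg _) (hD _ hw0 _ hstar) 2
    have haT : (0:ℝ) ≤ ‖w T - wstar‖^2 := sq_nonneg _
    simp only [nsmul_eq_mul] at h1
    linarith
  -- min times T is at most the sum
  set m := (Finset.range T).inf' (Finset.nonempty_range_iff.mpr (by omega))
      (fun t => f (w t) - f wstar) with hm
  have hmin : (T:ℝ) * m ≤ ∑ t ∈ Finset.range T, (f (w t) - f wstar) := by
    have := Finset.card_nsmul_le_sum (Finset.range T)
      (fun t => f (w t) - f wstar) m (fun t ht => Finset.inf'_le _ ht)
    simpa [Finset.card_range, nsmul_eq_mul] using this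
  have hT0 : (0:ℝ) < T := by exact_mod_cast hT
  have h2ηT : (0:ℝ) < 2*η*T := by positivity
  rw [show D^2/(2*η*T) + η*(G+ε)^2/2 + ε*D
      = (D^2 + T*(η^2*(G+ε)^2) + T*(2*η*(ε*D)))/(2*η*T) by field_simp,
    le_div_iff₀ h2ηT]
  nlinarith [mul_le_mul_of_nonneg_left hmin (by linarith : (0:ℝ) ≤ 2*η)]
end

section
/- Let (Ω, ℙ) be a probability space, L : Ω → ℝ an integrable random variable, and α ∈ (0, 1). Define the Value-at-Risk q_α = sInf { z ∈ ℝ : ℙ(L ≤ z) ≥ α } and the Rockafellar–Uryasev objective h_α(z) = z + (1 − α)⁻¹ · E[max(L − z, 0)]. Then h_α(q_α) ≤ h_α(z) for every z ∈ ℝ; that is, the α-quantile of L minimizes h_α over ℝ. -/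
open MeasureTheory

lemma ptA (x z q : ℝ) : (if q < x then q - z else 0) ≤ max (x - z) 0 - max (x - q) 0 := by
  rcases le_or_gt x q with h | h
  · rw [if_neg (not_lt.mpr h), max_eq_right (by linarith : x - q ≤ 0)]
    have := le_max_right (x - z) 0
    linarith
  · rw [if_pos h, max_eq_left (by linarith : 0 ≤ x - q)]
    have := le_max_left (x - z) 0
    linarith

lemma ptB (x z q : ℝ) : (if q ≤ x then q - z else 0) ≤ max (x - z) 0 - max (x - q) 0 := by
  rcases lt_or_ge x q with h | h
  · rw [if_neg (not_le.mpr h), max_eq_right (by linarith : x - q ≤ 0)]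
    have := le_max_right (x - z) 0
    linarith
  · rw [if_pos h, max_eq_left (by linarith : 0 ≤ x - q)]
    have := le_max_left (x - z) 0
    linarith

lemma int_bound {Ω : Type*} [MeasurableSpace Ω] (P : Measure Ω) [IsProbabilityMeasure P]
    (L : Ω → ℝ) (hLint : Integrable L P) (z q : ℝ) (A : Set Ω) (hA : MeasurableSet A)
    (hpt : ∀ ω, A.indicator (fun _ => q - z) ω ≤ max (L ω - z) 0 - max (L ω - q) 0) :
    (q - z) * (P A).toReal ≤ (∫ ω, max (L ω - z) 0 ∂P) - ∫ ω, max (L ω - q) 0 ∂P := by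
  have h1 : Integrable (fun ω => max (L ω - z) 0) P :=
    (hLint.sub (integrable_const z)).pos_part
  have h2 : Integrable (fun ω => max (L ω - q) 0) P :=
    (hLint.sub (integrable_const q)).pos_part
  have := integral_mono ((integrable_const (q - z)).indicator hA) (h1.sub h2) hpt
  simp only [Pi.sub_apply] at this
  rwa [integral_indicator_const _ hA, integral_sub h1 h2, smul_eq_mul, mul_comm] at this

/-- The α-quantile (Value-at-Risk) `q_α = inf{z : ℙ(L ≤ z) ≥ α}` minimizes the
Rockafellar–Uryasev objective `h_α(z) = z + (1 − α)⁻¹ · E[max(L − z, 0)]`. -/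
theorem var_minimizes_rockafellar_uryasev
    {Ω : Type*} [MeasurableSpace Ω] (P : Measure Ω) [IsProbabilityMeasure P]
    (L : Ω → ℝ) (hL : Measurable L) (hLint : Integrable L P)
    (α : ℝ) (hα : α ∈ Set.Ioo (0 : ℝ) 1)
    (q : ℝ) (hq : q = sInf {z : ℝ | α ≤ (P {ω | L ω ≤ z}).toReal})
    (h : ℝ → ℝ)
    (hh : ∀ z : ℝ, h z = z + (1 - α)⁻¹ * ∫ ω, max (L ω - z) 0 ∂P) :
    ∀ z : ℝ, h q ≤ h z := by
  obtain ⟨hα0, hα1⟩ := hα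
  set S : Set ℝ := {z : ℝ | α ≤ (P {ω | L ω ≤ z}).toReal} with hS
  have hmeas : ∀ z : ℝ, MeasurableSet {ω | L ω ≤ z} := fun z =>
    measurableSet_le hL measurable_const
  have hfin : ∀ s : Set Ω, P s ≠ ⊤ := fun s => measure_ne_top P s
  -- S is nonempty
  have hS_ne : S.Nonempty := by
    have hmono : Monotone (fun n : ℕ => {ω | L ω ≤ (n : ℝ)}) := by
      intro n m hnm ω hω
      simp only [Set.mem_setOf_eq] at hω ⊢
      exact le_trans hω (by exact_mod_cast hnm)
    have hU : (⋃ n : ℕ, {ω | L ω ≤ (n : ℝ)}) = Set.univ := by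
      ext ω; simp only [Set.mem_iUnion, Set.mem_univ, iff_true, Set.mem_setOf_eq]
      exact exists_nat_ge (L ω)
    have ht := tendsto_measure_iUnion_atTop (μ := P) hmono
    rw [hU, measure_univ] at ht
    have : ∀ᶠ n : ℕ in Filter.atTop, ENNReal.ofReal α ≤ (P ∘ fun n : ℕ => {ω | L ω ≤ (n : ℝ)}) n := by
      refine ht.eventually_const_le ?_
      exact lt_of_lt_of_le (ENNReal.ofReal_lt_one.mpr hα1) le_rfl
    obtain ⟨n, hn⟩ := this.exists
    refine ⟨(n : ℝ), ?_⟩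
    have := ENNReal.toReal_mono (hfin _) hn
    rwa [ENNReal.toReal_ofReal hα0.le] at this
  -- S is bounded below
  have hS_bdd : BddBelow S := by
    by_contra hbdd
    have hanti : Antitone (fun n : ℕ => {ω | L ω ≤ -(n : ℝ)}) := by
      intro n m hnm ω hω
      simp only [Set.mem_setOf_eq] at hω ⊢
      have : (n:ℝ) ≤ m := by exact_mod_cast hnm
      linarith
    have hI : (⋂ n : ℕ, {ω | L ω ≤ -(n : ℝ)}) = ∅ := by
      ext ω; simp only [Set.mem_iInter, Set.mem_setOf_eq, Set.mem_empty_iff_false, iff_false,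
        not_forall, not_le]
      obtain ⟨n, hn⟩ := exists_nat_gt (-L ω)
      exact ⟨n, by linarith⟩
    have ht := tendsto_measure_iInter_atTop (μ := P)
      (fun n => (hmeas _).nullMeasurableSet) hanti ⟨0, hfin _⟩
    rw [hI, measure_empty] at ht
    have hev : ∀ᶠ n : ℕ in Filter.atTop,
        (P ∘ fun n : ℕ => {ω | L ω ≤ -(n : ℝ)}) n < ENNReal.ofReal α :=
      ht.eventually_lt_const (by simpa using hα0)
    obtain ⟨n, hn⟩ := hev.exists
    rw [not_bddBelow_iff] at hbdd
    obtain ⟨z, hzS, hzlt⟩ := hbdd (-(n : ℝ))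
    have h1 : ENNReal.ofReal α ≤ P {ω | L ω ≤ z} :=
      ENNReal.ofReal_le_of_le_toReal hzS
    have h2 : P {ω | L ω ≤ z} ≤ P {ω | L ω ≤ -(n : ℝ)} :=
      measure_mono fun ω hω => le_trans hω hzlt.le
    exact absurd (h1.trans h2) (not_le.mpr hn)
  -- q is in S: α ≤ P(L ≤ q)
  have hqS : α ≤ (P {ω | L ω ≤ q}).toReal := by
    have key : ∀ n : ℕ, ENNReal.ofReal α ≤ P {ω | L ω ≤ q + 1 / (n + 1)} := by
      intro n
      have hpos : (0 : ℝ) < 1 / (n + 1) := by positivity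
      obtain ⟨s, hsS, hslt⟩ := Real.lt_sInf_add_pos hS_ne hpos
      rw [← hq] at hslt
      have h1 : ENNReal.ofReal α ≤ P {ω | L ω ≤ s} :=
        ENNReal.ofReal_le_of_le_toReal hsS
      exact h1.trans (measure_mono fun ω hω => le_trans hω hslt.le)
    have hanti : Antitone (fun n : ℕ => {ω | L ω ≤ q + 1 / (n + 1)}) := by
      intro n m hnm ω hω
      simp only [Set.mem_setOf_eq] at hω ⊢
      have h1 : (1:ℝ)/(m+1) ≤ 1/(n+1) := by
        apply one_div_le_one_div_of_le (by positivity)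
        have : (n:ℝ) ≤ m := by exact_mod_cast hnm
        linarith
      linarith
    have hI : (⋂ n : ℕ, {ω | L ω ≤ q + 1 / (n + 1)}) = {ω | L ω ≤ q} := by
      ext ω
      simp only [Set.mem_iInter, Set.mem_setOf_eq]
      constructor
      · intro hω
        refine le_of_forall_pos_le_add fun ε hε => ?_
        obtain ⟨n, hn⟩ := exists_nat_one_div_lt hε
        exact le_trans (hω n) (by linarith)
      · intro hω n
        linarith [hω, le_of_lt (by positivity : (0:ℝ) < 1 / (n + 1))]
    have ht := tendsto_measure_iInter_atTop (μ := P)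
      (fun n => (hmeas _).nullMeasurableSet) hanti ⟨0, hfin _⟩
    rw [hI] at ht
    have hlim : ENNReal.ofReal α ≤ P {ω | L ω ≤ q} :=
      ge_of_tendsto ht (Filter.Eventually.of_forall key)
    have := ENNReal.toReal_mono (hfin _) hlim
    rwa [ENNReal.toReal_ofReal hα0.le] at this
  -- P(L < q) ≤ α
  have hqlt : (P {ω | L ω < q}).toReal ≤ α := by
    have key : ∀ n : ℕ, P {ω | L ω ≤ q - 1 / (n + 1)} ≤ ENNReal.ofReal α := by
      intro n
      have hpos : (0 : ℝ) < 1 / (n + 1) := by positivity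
      have hnotin : q - 1 / (n + 1) ∉ S := by
        intro hmem
        have := csInf_le hS_bdd hmem
        rw [← hq] at this
        linarith
      rw [hS, Set.mem_setOf_eq, not_le] at hnotin
      exact (ENNReal.le_ofReal_iff_toReal_le (hfin _) hα0.le).mpr hnotin.le
    have hmono : Monotone (fun n : ℕ => {ω | L ω ≤ q - 1 / (n + 1)}) := by
      intro n m hnm ω hω
      simp only [Set.mem_setOf_eq] at hω ⊢
      have h1 : (1:ℝ)/(m+1) ≤ 1/(n+1) := by
        apply one_div_le_one_div_of_le (by positivity)
        have : (n:ℝ) ≤ m := by exact_mod_cast hnm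
        linarith
      linarith
    have hU : (⋃ n : ℕ, {ω | L ω ≤ q - 1 / (n + 1)}) = {ω | L ω < q} := by
      ext ω
      simp only [Set.mem_iUnion, Set.mem_setOf_eq]
      constructor
      · rintro ⟨n, hn⟩
        have : (0:ℝ) < 1 / (n + 1) := by positivity
        linarith
      · intro hω
        obtain ⟨n, hn⟩ := exists_nat_one_div_lt (by linarith : (0:ℝ) < q - L ω)
        exact ⟨n, by linarith⟩
    have ht := tendsto_measure_iUnion_atTop (μ := P) hmono
    rw [hU] at ht
    have hlim : P {ω | L ω < q} ≤ ENNReal.ofReal α :=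
      le_of_tendsto ht (Filter.Eventually.of_forall key)
    calc (P {ω | L ω < q}).toReal ≤ (ENNReal.ofReal α).toReal :=
          ENNReal.toReal_mono ENNReal.ofReal_ne_top hlim
      _ = α := ENNReal.toReal_ofReal hα0.le
  -- main argument
  intro z
  rw [hh z, hh q]
  have hc : (0 : ℝ) < (1 - α)⁻¹ := inv_pos.mpr (by linarith)
  have hc1 : (1 - α)⁻¹ * (1 - α) = 1 := inv_mul_cancel₀ (by linarith)
  rcases le_total q z with hzq | hzq
  · -- use A = {q < L}
    set A : Set Ω := {ω | q < L ω} with hA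
    have hAm : MeasurableSet A := measurableSet_lt measurable_const hL
    have hpt : ∀ ω, A.indicator (fun _ => q - z) ω ≤ max (L ω - z) 0 - max (L ω - q) 0 := by
      intro ω
      rw [Set.indicator_apply]
      simpa [hA] using ptA (L ω) z q
    have hbd := int_bound P L hLint z q A hAm hpt
    -- complement relation
    have hcompl : (P {ω | L ω ≤ q}).toReal + (P A).toReal = 1 := by
      have hc' : Aᶜ = {ω | L ω ≤ q} := by
        ext ω; simp [hA, not_lt]
      have := measure_add_measure_compl (μ := P) hAm
      rw [hc', measure_univ] at this
      have := congrArg ENNReal.toReal this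
      rw [ENNReal.toReal_add (hfin _) (hfin _)] at this
      simpa [add_comm] using this
    have hple : (P A).toReal ≤ 1 - α := by linarith
    have hbd' : (1 - α)⁻¹ * ((q - z) * (P A).toReal) ≤
        (1 - α)⁻¹ * ((∫ ω, max (L ω - z) 0 ∂P) - ∫ ω, max (L ω - q) 0 ∂P) :=
      mul_le_mul_of_nonneg_left hbd hc.le
    have hPA0 : 0 ≤ (P A).toReal := ENNReal.toReal_nonneg
    nlinarith [mul_le_mul_of_nonneg_left hple (mul_nonneg hc.le (sub_nonneg.mpr hzq))]
  · -- use A = {q ≤ L}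
    set A : Set Ω := {ω | q ≤ L ω} with hA
    have hAm : MeasurableSet A := measurableSet_le measurable_const hL
    have hpt : ∀ ω, A.indicator (fun _ => q - z) ω ≤ max (L ω - z) 0 - max (L ω - q) 0 := by
      intro ω
      rw [Set.indicator_apply]
      simpa [hA] using ptB (L ω) z q
    have hbd := int_bound P L hLint z q A hAm hpt
    have hcompl : (P {ω | L ω < q}).toReal + (P A).toReal = 1 := by
      have hc' : Aᶜ = {ω | L ω < q} := by
        ext ω; simp [hA, not_le]
      have := measure_add_measure_compl (μ := P) hAm
      rw [hc', measure_univ] at this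
      have := congrArg ENNReal.toReal this
      rw [ENNReal.toReal_add (hfin _) (hfin _)] at this
      simpa [add_comm] using this
    have hpge : 1 - α ≤ (P A).toReal := by linarith
    have hbd' : (1 - α)⁻¹ * ((q - z) * (P A).toReal) ≤
        (1 - α)⁻¹ * ((∫ ω, max (L ω - z) 0 ∂P) - ∫ ω, max (L ω - q) 0 ∂P) :=
      mul_le_mul_of_nonneg_left hbd hc.le
    have hPA0 : 0 ≤ (P A).toReal := ENNReal.toReal_nonneg
    nlinarith [mul_le_mul_of_nonneg_left hpge (mul_nonneg hc.le (sub_nonneg.mpr hzq))]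
end

section
/- Let (Ω, ℙ) be a probability space, L : Ω → ℝ an integrable random variable, and α ∈ (0, 1). Define q_α = sInf { z ∈ ℝ : ℙ(L ≤ z) ≥ α } and h_α(z) = z + (1 − α)⁻¹ · E[max(L − z, 0)]. If ℙ(L = q_α) = 0, then h_α(q_α) = (1 − α)⁻¹ · E[L · 1{L ≥ q_α}], i.e. the Rockafellar–Uryasev minimum value equals the conditional expectation of L on the tail event {L ≥ q_α}. -/
open MeasureTheory

/-- If `L` has no atom at its α-quantile `q_α = inf{z : ℙ(L ≤ z) ≥ α}`, then
the Rockafellar–Uryasev minimum value equals the tail conditional expectation: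
`h_α(q_α) = (1 − α)⁻¹ · E[L · 1{L ≥ q_α}]`. -/
theorem rockafellar_uryasev_min_eq_tail_expectation
    {Ω : Type*} [MeasurableSpace Ω] (P : Measure Ω) [IsProbabilityMeasure P]
    (L : Ω → ℝ) (hL : Measurable L) (hLint : Integrable L P)
    (α : ℝ) (hα : α ∈ Set.Ioo (0 : ℝ) 1)
    (q : ℝ) (hq : q = sInf {z : ℝ | α ≤ (P {ω | L ω ≤ z}).toReal})
    (h : ℝ → ℝ)
    (hh : ∀ z : ℝ, h z = z + (1 - α)⁻¹ * ∫ ω, max (L ω - z) 0 ∂P)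
    (hatom : P {ω | L ω = q} = 0) :
    h q = (1 - α)⁻¹ * ∫ ω in {ω | q ≤ L ω}, L ω ∂P := by
  have hα0 := hα.1
  have hα1 := hα.2
  set μ := P.map L with hμ
  haveI hμprob : IsProbabilityMeasure μ := Measure.isProbabilityMeasure_map hL.aemeasurable
  have hmap : ∀ z, P {ω | L ω ≤ z} = μ (Set.Iic z) := by
    intro z
    rw [hμ, Measure.map_apply hL measurableSet_Iic]
    rfl
  set F := ProbabilityTheory.cdf μ with hF
  have hFz : ∀ z, (P {ω | L ω ≤ z}).toReal = F z := by
    intro z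
    rw [hmap, hF, ProbabilityTheory.cdf_eq_real, measureReal_def]
  set S := {z : ℝ | α ≤ F z} with hS
  have hqS : q = sInf S := by
    rw [hq]
    congr 1
    ext z
    simp [hS, hFz z]
  -- S is nonempty
  have hSne : S.Nonempty := by
    have := (ProbabilityTheory.tendsto_cdf_atTop μ).eventually (eventually_ge_nhds hα1)
    exact this.exists
  -- S is bounded below
  have hSbdd : BddBelow S := by
    obtain ⟨z₀, hz₀⟩ :=
      ((ProbabilityTheory.tendsto_cdf_atBot μ).eventually (eventually_lt_nhds hα0)).exists
    refine ⟨z₀, fun z hz => ?_⟩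
    by_contra hlt
    push_neg at hlt
    exact absurd (le_trans hz ((ProbabilityTheory.monotone_cdf μ) hlt.le)) (not_le.2 hz₀)
  -- α ≤ F q
  have hFq_ge : α ≤ F q := by
    have htend : Filter.Tendsto F (nhdsWithin q (Set.Ioi q)) (nhds (F q)) :=
      ((ProbabilityTheory.cdf μ).right_continuous q).tendsto.mono_left
        (nhdsWithin_mono q Set.Ioi_subset_Ici_self)
    refine ge_of_tendsto htend ?_
    filter_upwards [self_mem_nhdsWithin] with z hz
    obtain ⟨s, hsS, hsz⟩ := exists_lt_of_csInf_lt hSne (hqS ▸ hz : sInf S < z)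
    exact le_trans hsS ((ProbabilityTheory.monotone_cdf μ) hsz.le)
  -- leftLim F q ≤ α
  have hleft : Function.leftLim F q ≤ α := by
    have htend : Filter.Tendsto F (nhdsWithin q (Set.Iio q)) (nhds (Function.leftLim F q)) :=
      (ProbabilityTheory.monotone_cdf μ).tendsto_leftLim q
    refine le_of_tendsto htend ?_
    filter_upwards [self_mem_nhdsWithin] with z hz
    by_contra hgt
    push_neg at hgt
    have : q ≤ z := hqS ▸ csInf_le hSbdd hgt.le
    exact absurd this (not_le.2 hz)
  -- no atom at q : F q = leftLim F q
  have hatomμ : μ {q} = 0 := by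
    rw [hμ, Measure.map_apply hL (measurableSet_singleton q)]
    exact hatom
  have hcont : F q = Function.leftLim F q := by
    have hmeas : (ProbabilityTheory.cdf μ).measure {q} = 0 := by
      rw [ProbabilityTheory.measure_cdf μ]; exact hatomμ
    rw [StieltjesFunction.measure_singleton] at hmeas
    have h1 : F q - Function.leftLim F q ≤ 0 := ENNReal.ofReal_eq_zero.mp hmeas
    have h2 : Function.leftLim F q ≤ F q := (ProbabilityTheory.monotone_cdf μ).leftLim_le le_rfl
    linarith
  have hFq : F q = α := le_antisymm (hcont ▸ hleft) hFq_ge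
  -- P {L ≤ q} = ofReal α
  have hPle : P {ω | L ω ≤ q} = ENNReal.ofReal α := by
    have := hFz q
    rw [hFq] at this
    rw [← this, ENNReal.ofReal_toReal (measure_ne_top P _)]
  -- P {L < q} = ofReal α
  have hPlt : P {ω | L ω < q} = ENNReal.ofReal α := by
    have hsub : {ω | L ω ≤ q} ⊆ {ω | L ω < q} ∪ {ω | L ω = q} := by
      intro ω hω
      have hω' : L ω ≤ q := hω
      rcases lt_or_eq_of_le hω' with h' | h'
      · exact Or.inl h'
      · exact Or.inr h'
    have hle1 : P {ω | L ω ≤ q} ≤ P {ω | L ω < q} := by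
      calc P {ω | L ω ≤ q} ≤ P ({ω | L ω < q} ∪ {ω | L ω = q}) := measure_mono hsub
        _ ≤ P {ω | L ω < q} + P {ω | L ω = q} := measure_union_le _ _
        _ = P {ω | L ω < q} := by rw [hatom, add_zero]
    have hle2 : P {ω | L ω < q} ≤ P {ω | L ω ≤ q} :=
      measure_mono (fun ω (hω : L ω < q) => le_of_lt hω)
    rw [← hPle]
    exact le_antisymm hle2 hle1
  -- tail measure
  have hcompl : {ω | q ≤ L ω} = {ω | L ω < q}ᶜ := by
    ext ω; simp [not_lt]
  have htail : (P {ω | q ≤ L ω}).toReal = 1 - α := by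
    have hm : MeasurableSet {ω | L ω < q} := hL measurableSet_Iio
    rw [hcompl, measure_compl hm (measure_ne_top P _), hPlt, measure_univ,
      ENNReal.toReal_sub_of_le (by simpa using hα1.le) ENNReal.one_ne_top]
    simp [ENNReal.toReal_ofReal hα0.le]
  -- the set is measurable
  have hmeasset : MeasurableSet {ω | q ≤ L ω} := by
    have : {ω | q ≤ L ω} = L ⁻¹' Set.Ici q := rfl
    rw [this]; exact hL measurableSet_Ici
  -- rewrite the max integral
  have hmaxeq : ∀ ω, max (L ω - q) 0 =
      Set.indicator {ω | q ≤ L ω} (fun ω => L ω - q) ω := by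
    intro ω
    rw [Set.indicator_apply]
    split_ifs with hω
    · exact max_eq_left (by simp only [Set.mem_setOf_eq] at hω; linarith)
    · exact max_eq_right (by simp only [Set.mem_setOf_eq, not_le] at hω; linarith)
  have hint : ∫ ω, max (L ω - q) 0 ∂P
      = (∫ ω in {ω | q ≤ L ω}, L ω ∂P) - q * (1 - α) := by
    calc ∫ ω, max (L ω - q) 0 ∂P
        = ∫ ω, Set.indicator {ω | q ≤ L ω} (fun ω => L ω - q) ω ∂P := by
          exact integral_congr_ae (Filter.Eventually.of_forall hmaxeq)
      _ = ∫ ω in {ω | q ≤ L ω}, (L ω - q) ∂P := integral_indicator hmeasset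
      _ = (∫ ω in {ω | q ≤ L ω}, L ω ∂P) - ∫ ω in {ω | q ≤ L ω}, q ∂P := by
          exact integral_sub (hLint.restrict) (integrable_const q)
      _ = (∫ ω in {ω | q ≤ L ω}, L ω ∂P) - q * (1 - α) := by
          rw [setIntegral_const, measureReal_def, htail, smul_eq_mul, mul_comm]
  rw [hh q, hint]
  have h1α : (1 : ℝ) - α ≠ 0 := by linarith
  field_simp
  ring
end

section
/- Let (Ω, ℙ) be a probability space, r : Ω → ℝ^d an integrable random vector, α ∈ (0, 1), and w ∈ ℝ^d. Let L = −⟪w, r⟫ be the portfolio loss, and let q = sInf { z ∈ ℝ : ℙ(L ≤ z) ≥ α }. Assume ℙ(L = q) = 0 and ℙ(L ≥ q) = 1 − α. Define F(v) = ⨅_{z ∈ ℝ} ( z + (1 − α)⁻¹ · E[max(−⟪v, r⟫ − z, 0)] ) and g = (1 − α)⁻¹ • E[(−r) · 1{L ≥ q}]. Then for all v ∈ ℝ^d, F(v) ≥ F(w) + ⟪g, v − w⟫; that is, g = E[−r | L ≥ q] is a subgradient of F = CVaR_α at w. -/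
open MeasureTheory
open scoped RealInnerProductSpace

/-- Rockafellar–Uryasev subgradient formula: with loss `L = −⟪w, r⟫`, VaR
threshold `q` the α-quantile of `L`, no atom at `q`, and `ℙ(L ≥ q) = 1 − α`,
the vector `g = (1 − α)⁻¹ • E[(−r) · 1{L ≥ q}] = E[−r | L ≥ q]` is a
subgradient at `w` of `F(v) = ⨅_z ( z + (1 − α)⁻¹ · E[max(−⟪v, r⟫ − z, 0)] )`,
i.e. `F(v) ≥ F(w) + ⟪g, v − w⟫` for all `v`. -/
theorem cvar_subgradient_formula
    {Ω : Type*} [MeasurableSpace Ω] (P : Measure Ω) [IsProbabilityMeasure P]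
    {d : ℕ} (r : Ω → EuclideanSpace ℝ (Fin d)) (hr : Integrable r P)
    (α : ℝ) (hα : α ∈ Set.Ioo (0 : ℝ) 1)
    (w : EuclideanSpace ℝ (Fin d))
    (L : Ω → ℝ) (hLdef : ∀ ω, L ω = -⟪w, r ω⟫)
    (q : ℝ) (hq : q = sInf {z : ℝ | α ≤ (P {ω | L ω ≤ z}).toReal})
    (hatom : P {ω | L ω = q} = 0)
    (htail : (P {ω | q ≤ L ω}).toReal = 1 - α)
    (F : EuclideanSpace ℝ (Fin d) → ℝ)
    (hF : ∀ v : EuclideanSpace ℝ (Fin d),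
      F v = ⨅ z : ℝ, (z + (1 - α)⁻¹ * ∫ ω, max (-⟪v, r ω⟫ - z) 0 ∂P))
    (g : EuclideanSpace ℝ (Fin d))
    (hg : g = (1 - α)⁻¹ • ∫ ω in {ω | q ≤ L ω}, (-(r ω)) ∂P) :
    ∀ v : EuclideanSpace ℝ (Fin d), F v ≥ F w + ⟪g, v - w⟫ := by
  intro v
  obtain ⟨hα0, hα1⟩ := hα
  have h1α : (0 : ℝ) < 1 - α := by linarith
  set c : ℝ := (1 - α)⁻¹ with hc
  have hcmul : c * (1 - α) = 1 := inv_mul_cancel₀ h1α.ne'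
  have hc0 : 0 < c := inv_pos.mpr h1α
  have hc1 : 1 ≤ c := by nlinarith
  -- integrability of inner products with `r`
  have hint : ∀ u : EuclideanSpace ℝ (Fin d), Integrable (fun ω => ⟪u, r ω⟫) P :=
    fun u => ((innerSL ℝ u).restrictScalars ℝ).integrable_comp hr
  have hintneg : ∀ u : EuclideanSpace ℝ (Fin d),
      Integrable (fun ω => -⟪u, r ω⟫) P := fun u => (hint u).neg
  have hintmax : ∀ (u : EuclideanSpace ℝ (Fin d)) (z : ℝ),
      Integrable (fun ω => max (-⟪u, r ω⟫ - z) 0) P := by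
    intro u z
    exact ((hintneg u).sub (integrable_const z)).pos_part
  -- measurable version of `r` and of the tail set
  obtain ⟨r₀, hr₀m, hrr₀⟩ := hr.aestronglyMeasurable
  set s₀ : Set Ω := {ω | q ≤ -⟪w, r₀ ω⟫} with hs₀
  have hs₀m : MeasurableSet s₀ := by
    have : Measurable fun ω => -⟪w, r₀ ω⟫ :=
      (((stronglyMeasurable_const (b := w)).inner hr₀m).measurable).neg
    exact measurableSet_le measurable_const this
  have hLL₀ : ∀ᵐ ω ∂P, L ω = -⟪w, r₀ ω⟫ := by
    filter_upwards [hrr₀] with ω h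
    rw [hLdef ω, h]
  have hsEq : {ω | q ≤ L ω} =ᵐ[P] s₀ := by
    filter_upwards [hLL₀] with ω h
    show (q ≤ L ω) = (q ≤ -⟪w, r₀ ω⟫)
    rw [h]
  have htail₀ : (P s₀).toReal = 1 - α := by
    rw [← measure_congr hsEq]; exact htail
  -- identify `⟪g, v - w⟫`
  have hginner : ⟪g, v - w⟫ = c * ∫ ω in s₀, (⟪w - v, r ω⟫) ∂P := by
    rw [hg, real_inner_smul_left, real_inner_comm]
    congr 1
    have h0 : Integrable (fun ω => -(r ω)) (P.restrict {ω | q ≤ L ω}) :=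
      hr.integrableOn.neg
    rw [← integral_inner h0]
    have h1 : ∀ ω, ⟪v - w, -(r ω)⟫ = ⟪w - v, r ω⟫ := by
      intro ω
      rw [inner_neg_right, ← inner_neg_left]
      congr 1
      abel
    calc ∫ ω in {ω | q ≤ L ω}, ⟪v - w, -(r ω)⟫ ∂P
        = ∫ ω in {ω | q ≤ L ω}, ⟪w - v, r ω⟫ ∂P :=
          integral_congr_ae (Filter.Eventually.of_forall fun ω => h1 ω)
      _ = ∫ ω in s₀, ⟪w - v, r ω⟫ ∂P := setIntegral_congr_set hsEq
  -- boundedness from below of the RU objective (for w), needed for `ciInf_le`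
  have hbdd : BddBelow (Set.range fun z : ℝ =>
      z + c * ∫ ω, max (-⟪w, r ω⟫ - z) 0 ∂P) := by
    refine ⟨∫ ω, (-⟪w, r ω⟫) ∂P, ?_⟩
    rintro x ⟨z, rfl⟩
    dsimp only
    set m : ℝ := ∫ ω, (-⟪w, r ω⟫) ∂P with hm
    have hge : ∫ ω, max (-⟪w, r ω⟫ - z) 0 ∂P ≥ m - z := by
      have h2 : m - z = ∫ ω, (-⟪w, r ω⟫ - z) ∂P := by
        rw [integral_sub (hintneg w) (integrable_const z), integral_const]
        simp [hm]
      rw [h2]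
      exact integral_mono ((hintneg w).sub (integrable_const z)) (hintmax w z)
        (fun ω => le_max_left _ _)
    have hge0 : (0 : ℝ) ≤ ∫ ω, max (-⟪w, r ω⟫ - z) 0 ∂P :=
      integral_nonneg fun ω => le_max_right _ _
    rcases le_total z m with hzm | hzm
    · linarith [le_mul_of_one_le_left hge0 hc1]
    · linarith [mul_nonneg hc0.le hge0]
  have hFw : F w ≤ q + c * ∫ ω, max (-⟪w, r ω⟫ - q) 0 ∂P := by
    rw [hF w]; exact ciInf_le hbdd q
  -- the main inequality: for every z, Φ(v,z) ≥ Φ(w,q) + ⟪g, v-w⟫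
  have key : ∀ z : ℝ,
      (q + c * ∫ ω, max (-⟪w, r ω⟫ - q) 0 ∂P) + ⟪g, v - w⟫
        ≤ z + c * ∫ ω, max (-⟪v, r ω⟫ - z) 0 ∂P := by
    intro z
    have hindint : Integrable (s₀.indicator fun ω => ⟪w - v, r ω⟫ + (q - z)) P :=
      ((hint (w - v)).add (integrable_const (q - z))).indicator hs₀m
    have hmono : ∫ ω, (max (-⟪w, r ω⟫ - q) 0
          + s₀.indicator (fun ω => ⟪w - v, r ω⟫ + (q - z)) ω) ∂P
        ≤ ∫ ω, max (-⟪v, r ω⟫ - z) 0 ∂P := by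
      refine integral_mono_ae ((hintmax w q).add hindint) (hintmax v z) ?_
      filter_upwards [hrr₀] with ω hω
      have hinn : ⟪w - v, r ω⟫ = -⟪v, r ω⟫ - -⟪w, r ω⟫ := by
        rw [inner_sub_left]; ring
      by_cases hmem : ω ∈ s₀
      · have hq' : q ≤ -⟪w, r ω⟫ := by
          have h3 := hmem
          simp only [hs₀, Set.mem_setOf_eq] at h3
          rw [hω]; exact h3
        rw [Set.indicator_of_mem hmem, max_eq_left (by linarith), hinn]
        calc -⟪w, r ω⟫ - q + (-⟪v, r ω⟫ - -⟪w, r ω⟫ + (q - z))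
            = -⟪v, r ω⟫ - z := by ring
          _ ≤ max (-⟪v, r ω⟫ - z) 0 := le_max_left _ _
      · rw [Set.indicator_of_notMem hmem]
        have hq' : -⟪w, r ω⟫ < q := by
          have h3 := hmem
          simp only [hs₀, Set.mem_setOf_eq, not_le] at h3
          rw [hω]; exact h3
        rw [max_eq_right (by linarith)]
        simp
    -- compute the integral of the sum
    have hsum : ∫ ω, (max (-⟪w, r ω⟫ - q) 0
          + s₀.indicator (fun ω => ⟪w - v, r ω⟫ + (q - z)) ω) ∂P
        = (∫ ω, max (-⟪w, r ω⟫ - q) 0 ∂P)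
          + ((∫ ω in s₀, ⟪w - v, r ω⟫ ∂P) + (q - z) * (1 - α)) := by
      rw [integral_add (hintmax w q) hindint]
      congr 1
      rw [integral_indicator hs₀m,
        integral_add ((hint (w - v)).integrableOn)
          (integrableOn_const (measure_lt_top P s₀).ne)]
      congr 1
      rw [setIntegral_const, smul_eq_mul, mul_comm, measureReal_def, htail₀]
    rw [hsum] at hmono
    rw [hginner]
    set A : ℝ := ∫ ω, max (-⟪w, r ω⟫ - q) 0 ∂P
    set B : ℝ := ∫ ω, max (-⟪v, r ω⟫ - z) 0 ∂P
    set S : ℝ := ∫ ω in s₀, ⟪w - v, r ω⟫ ∂P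
    have h4 : c * A + c * S + (q - z) = c * (A + (S + (q - z) * (1 - α))) := by
      linear_combination (z - q) * hcmul
    have h5 : c * (A + (S + (q - z) * (1 - α))) ≤ c * B :=
      mul_le_mul_of_nonneg_left hmono hc0.le
    linarith
  -- conclude
  rw [ge_iff_le, hF v]
  refine le_ciInf fun z => ?_
  calc F w + ⟪g, v - w⟫
      ≤ (q + c * ∫ ω, max (-⟪w, r ω⟫ - q) 0 ∂P) + ⟪g, v - w⟫ := by linarith [hFw]
    _ ≤ z + c * ∫ ω, max (-⟪v, r ω⟫ - z) 0 ∂P := key z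
end
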